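/- In the saddle-point setting with inexact preconditioning, where M_U = [[F, Bᵀ],[0, H2]], M̃_U = [[P₁, Bᵀ],[0, H2]], P₁ ∈ ℝ^{n×n} is nonsingular, ‖P₁⁻¹F − I‖_{H1} ≤ C₃η and ‖F⁻¹P₁‖_{H1} ≤ C₄, and H = blockdiag(H1, H2), one has ‖M̃_U⁻¹M_U‖_H ≤ 2 + C₃η and ‖(M̃_U⁻¹M_U)⁻¹‖_H ≤ C₄ + 1. -/

import Mathlib

open Matrix

/-- The `H`-norm of a vector: `‖u‖_H = (uᵀ H u)^{1/2}`. -/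
noncomputable def vnorm {α : Type*} [Fintype α] (H : Matrix α α ℝ) (u : α → ℝ) : ℝ :=
  Real.sqrt (u ⬝ᵥ (H *ᵥ u))

/-- The weighted operator norm `‖M‖_{H1,H2} = sup_{v ≠ 0} ‖M v‖_{H2} / ‖v‖_{H1}`.
For a square matrix, `‖M‖_H = wnorm H H M`; the spectral norm is `wnorm 1 1 M`. -/
noncomputable def wnorm {α β : Type*} [Fintype α] [Fintype β]
    (H1 : Matrix α α ℝ) (H2 : Matrix β β ℝ) (M : Matrix β α ℝ) : ℝ :=
  sSup {r : ℝ | ∃ v : α → ℝ, v ≠ 0 ∧ r = vnorm H2 (M *ᵥ v) / vnorm H1 v}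
namespace StmtAux

variable {α β : Type*} [Fintype α] [Fintype β]

noncomputable def en (u : α → ℝ) : ℝ := Real.sqrt (u ⬝ᵥ u)

lemma dot_self_nonneg (u : α → ℝ) : 0 ≤ u ⬝ᵥ u :=
  Finset.sum_nonneg fun i _ => mul_self_nonneg _

lemma vnorm_nonneg (H : Matrix α α ℝ) (u : α → ℝ) : 0 ≤ vnorm H u := Real.sqrt_nonneg _

lemma vnorm_pos {H : Matrix α α ℝ} (hH : H.PosDef) {u : α → ℝ} (hu : u ≠ 0) :
    0 < vnorm H u := Real.sqrt_pos.mpr (by simpa using hH.dotProduct_mulVec_pos hu)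

lemma pd_dot_nonneg {H : Matrix α α ℝ} (hH : H.PosDef) (u : α → ℝ) :
    0 ≤ u ⬝ᵥ (H *ᵥ u) := by simpa using hH.posSemidef.dotProduct_mulVec_nonneg u

lemma en_triangle (u w : α → ℝ) : en (u + w) ≤ en u + en w := by
  have hcs : u ⬝ᵥ w ≤ en u * en w := by
    have h2 : (u ⬝ᵥ w) ^ 2 ≤ (u ⬝ᵥ u) * (w ⬝ᵥ w) := by
      have := Finset.sum_mul_sq_le_sq_mul_sq Finset.univ u w
      simpa [dotProduct, pow_two, Finset.mul_sum, mul_comm] using this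
    calc u ⬝ᵥ w ≤ |u ⬝ᵥ w| := le_abs_self _
      _ = Real.sqrt ((u ⬝ᵥ w) ^ 2) := (Real.sqrt_sq_eq_abs _).symm
      _ ≤ Real.sqrt ((u ⬝ᵥ u) * (w ⬝ᵥ w)) := Real.sqrt_le_sqrt h2
      _ = en u * en w := Real.sqrt_mul (dot_self_nonneg u) _
  have hexp : (u + w) ⬝ᵥ (u + w) = u ⬝ᵥ u + 2 * (u ⬝ᵥ w) + w ⬝ᵥ w := by
    simp [add_dotProduct, dotProduct_add, dotProduct_comm w u]; ring
  have hle : (u + w) ⬝ᵥ (u + w) ≤ (en u + en w) ^ 2 := by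
    have hu2 : en u ^ 2 = u ⬝ᵥ u := Real.sq_sqrt (dot_self_nonneg u)
    have hw2 : en w ^ 2 = w ⬝ᵥ w := Real.sq_sqrt (dot_self_nonneg w)
    rw [hexp]; nlinarith [hcs]
  calc en (u + w) = Real.sqrt ((u + w) ⬝ᵥ (u + w)) := rfl
    _ ≤ Real.sqrt ((en u + en w) ^ 2) := Real.sqrt_le_sqrt hle
    _ = en u + en w := Real.sqrt_sq (add_nonneg (Real.sqrt_nonneg _) (Real.sqrt_nonneg _))

lemma en_mulVec_le (A : Matrix β α ℝ) (w : α → ℝ) :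
    en (A *ᵥ w) ≤ Real.sqrt (∑ i, ∑ j, A i j ^ 2) * en w := by
  have key : (A *ᵥ w) ⬝ᵥ (A *ᵥ w) ≤ (∑ i, ∑ j, A i j ^ 2) * (w ⬝ᵥ w) := by
    have h1 : ∀ i, (A *ᵥ w) i ^ 2 ≤ (∑ j, A i j ^ 2) * (w ⬝ᵥ w) := by
      intro i
      have := Finset.sum_mul_sq_le_sq_mul_sq Finset.univ (fun j => A i j) w
      simpa [mulVec, dotProduct, pow_two] using this
    calc (A *ᵥ w) ⬝ᵥ (A *ᵥ w) = ∑ i, (A *ᵥ w) i ^ 2 := by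
          simp [dotProduct, pow_two]
      _ ≤ ∑ i, (∑ j, A i j ^ 2) * (w ⬝ᵥ w) := Finset.sum_le_sum fun i _ => h1 i
      _ = (∑ i, ∑ j, A i j ^ 2) * (w ⬝ᵥ w) := by rw [Finset.sum_mul]
  calc en (A *ᵥ w) ≤ Real.sqrt ((∑ i, ∑ j, A i j ^ 2) * (w ⬝ᵥ w)) := Real.sqrt_le_sqrt key
    _ = _ := Real.sqrt_mul (Finset.sum_nonneg fun i _ => Finset.sum_nonneg fun j _ => sq_nonneg _) _

open scoped MatrixOrder in
lemma exists_sqrt [DecidableEq α] {H : Matrix α α ℝ} (hH : H.PosDef) :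
    ∃ S : Matrix α α ℝ, IsUnit S.det ∧ ∀ u, vnorm H u = en (S *ᵥ u) := by
  obtain ⟨B, hB⟩ := CStarAlgebra.nonneg_iff_eq_star_mul_self.mp hH.posSemidef.nonneg
  refine ⟨B, ?_, ?_⟩
  · have hdet : B.det * B.det = H.det := by
      rw [hB, star_eq_conjTranspose, det_mul, det_conjTranspose]; simp
    rw [isUnit_iff_ne_zero]
    intro h0
    rw [h0, mul_zero] at hdet
    exact hH.det_pos.ne' hdet.symm
  · intro u
    unfold vnorm en
    congr 1
    rw [hB, star_eq_conjTranspose, conjTranspose_eq_transpose_of_trivial, ← Matrix.mulVec_mulVec,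
      Matrix.dotProduct_mulVec, Matrix.vecMul_transpose]

lemma exists_bound [DecidableEq α] [DecidableEq β] {H1 : Matrix α α ℝ} {H2 : Matrix β β ℝ}
    (h1 : H1.PosDef) (h2 : H2.PosDef) (M : Matrix β α ℝ) :
    ∃ K, ∀ v, vnorm H2 (M *ᵥ v) ≤ K * vnorm H1 v := by
  obtain ⟨S1, hS1u, hS1v⟩ := exists_sqrt h1
  obtain ⟨S2, _, hS2v⟩ := exists_sqrt h2
  refine ⟨Real.sqrt (∑ i, ∑ j, (S2 * M * S1⁻¹) i j ^ 2), fun v => ?_⟩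
  rw [hS2v, hS1v]
  have heq : S2 *ᵥ (M *ᵥ v) = (S2 * M * S1⁻¹) *ᵥ (S1 *ᵥ v) := by
    rw [Matrix.mulVec_mulVec, Matrix.mulVec_mulVec, Matrix.mul_assoc (S2 * M),
      Matrix.nonsing_inv_mul _ hS1u, Matrix.mul_one]
  rw [heq]
  exact en_mulVec_le _ _

lemma vnorm_triangle [DecidableEq α] {H : Matrix α α ℝ} (hH : H.PosDef) (u w : α → ℝ) :
    vnorm H (u + w) ≤ vnorm H u + vnorm H w := by
  obtain ⟨S, _, hSv⟩ := exists_sqrt hH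
  rw [hSv, hSv, hSv, Matrix.mulVec_add]
  exact en_triangle _ _

lemma wnorm_le {H1 : Matrix α α ℝ} {H2 : Matrix β β ℝ}
    (hpos : ∀ v : α → ℝ, v ≠ 0 → 0 < vnorm H1 v)
    {M : Matrix β α ℝ} {c : ℝ} (hc : 0 ≤ c)
    (h : ∀ v, vnorm H2 (M *ᵥ v) ≤ c * vnorm H1 v) : wnorm H1 H2 M ≤ c := by
  apply Real.sSup_le _ hc
  rintro r ⟨v, hv, rfl⟩
  rw [div_le_iff₀ (hpos v hv)]
  exact h v

lemma le_of_wnorm_le [DecidableEq α] [DecidableEq β] {H1 : Matrix α α ℝ} {H2 : Matrix β β ℝ}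
    (h1 : H1.PosDef) (h2 : H2.PosDef) {M : Matrix β α ℝ} {c : ℝ}
    (h : wnorm H1 H2 M ≤ c) (v : α → ℝ) : vnorm H2 (M *ᵥ v) ≤ c * vnorm H1 v := by
  rcases eq_or_ne v 0 with rfl | hv
  · simp [vnorm, Matrix.mulVec_zero]
  · obtain ⟨K, hK⟩ := exists_bound h1 h2 M
    have bdd : BddAbove {r : ℝ | ∃ w : α → ℝ, w ≠ 0 ∧ r = vnorm H2 (M *ᵥ w) / vnorm H1 w} := by
      refine ⟨K, ?_⟩
      rintro r ⟨w, hw, rfl⟩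
      rw [div_le_iff₀ (vnorm_pos h1 hw)]
      exact hK w
    have mem : vnorm H2 (M *ᵥ v) / vnorm H1 v ∈
        {r : ℝ | ∃ w : α → ℝ, w ≠ 0 ∧ r = vnorm H2 (M *ᵥ w) / vnorm H1 w} := ⟨v, hv, rfl⟩
    have := (le_csSup bdd mem).trans h
    rwa [div_le_iff₀ (vnorm_pos h1 hv)] at this

lemma dot_elim (u₁ w₁ : α → ℝ) (u₂ w₂ : β → ℝ) :
    Sum.elim u₁ u₂ ⬝ᵥ Sum.elim w₁ w₂ = u₁ ⬝ᵥ w₁ + u₂ ⬝ᵥ w₂ := by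
  simp [dotProduct, Fintype.sum_sum_type]

lemma vnorm_block (H1 : Matrix α α ℝ) (H2 : Matrix β β ℝ) (x : α → ℝ) (y : β → ℝ) :
    vnorm (fromBlocks H1 0 0 H2) (Sum.elim x y) =
      Real.sqrt (x ⬝ᵥ (H1 *ᵥ x) + y ⬝ᵥ (H2 *ᵥ y)) := by
  unfold vnorm
  rw [fromBlocks_mulVec]
  simp [dot_elim]

lemma block_vnorm_pos {H1 : Matrix α α ℝ} {H2 : Matrix β β ℝ}
    (h1 : H1.PosDef) (h2 : H2.PosDef) (v : α ⊕ β → ℝ) (hv : v ≠ 0) :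
    0 < vnorm (fromBlocks H1 0 0 H2) v := by
  have hv' : v = Sum.elim (v ∘ Sum.inl) (v ∘ Sum.inr) := (Sum.elim_comp_inl_inr v).symm
  rw [hv', vnorm_block]
  apply Real.sqrt_pos.mpr
  have hnz : v ∘ Sum.inl ≠ 0 ∨ v ∘ Sum.inr ≠ 0 := by
    by_contra hc
    push_neg at hc
    apply hv
    funext i
    cases i with
    | inl a => exact congrFun hc.1 a
    | inr b => exact congrFun hc.2 b
  rcases hnz with hx | hy
  · have := (by simpa using h1.dotProduct_mulVec_pos hx : 0 < (v ∘ Sum.inl) ⬝ᵥ (H1 *ᵥ (v ∘ Sum.inl)))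
    linarith [pd_dot_nonneg h2 (v ∘ Sum.inr)]
  · have := (by simpa using h2.dotProduct_mulVec_pos hy : 0 < (v ∘ Sum.inr) ⬝ᵥ (H2 *ᵥ (v ∘ Sum.inr)))
    linarith [pd_dot_nonneg h1 (v ∘ Sum.inl)]

lemma block_bound [DecidableEq β] {H1 : Matrix α α ℝ} {H2 : Matrix β β ℝ}
    (h1 : H1.PosDef) (h2 : H2.PosDef) (A : Matrix α α ℝ) {a : ℝ} (ha : 1 ≤ a)
    (hA : ∀ x, vnorm H1 (A *ᵥ x) ≤ a * vnorm H1 x) (v : α ⊕ β → ℝ) :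
    vnorm (fromBlocks H1 0 0 H2) (fromBlocks A 0 0 (1 : Matrix β β ℝ) *ᵥ v) ≤
      a * vnorm (fromBlocks H1 0 0 H2) v := by
  have hv' : v = Sum.elim (v ∘ Sum.inl) (v ∘ Sum.inr) := (Sum.elim_comp_inl_inr v).symm
  set x := v ∘ Sum.inl
  set y := v ∘ Sum.inr
  rw [hv', fromBlocks_mulVec]
  simp only [zero_mulVec, add_zero, zero_add, one_mulVec]
  rw [vnorm_block, vnorm_block]
  have hqx := pd_dot_nonneg h1 x
  have hqy := pd_dot_nonneg h2 y
  have hqAx := pd_dot_nonneg h1 (A *ᵥ x)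
  have hbound : (A *ᵥ x) ⬝ᵥ (H1 *ᵥ (A *ᵥ x)) ≤ a ^ 2 * (x ⬝ᵥ (H1 *ᵥ x)) := by
    have h := hA x
    have h2' : vnorm H1 (A *ᵥ x) ^ 2 ≤ (a * vnorm H1 x) ^ 2 :=
      pow_le_pow_left₀ (vnorm_nonneg _ _) h 2
    have e1 : vnorm H1 (A *ᵥ x) ^ 2 = (A *ᵥ x) ⬝ᵥ (H1 *ᵥ (A *ᵥ x)) := Real.sq_sqrt hqAx
    have e2 : vnorm H1 x ^ 2 = x ⬝ᵥ (H1 *ᵥ x) := Real.sq_sqrt hqx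
    rw [e1] at h2'
    rw [mul_pow, e2] at h2'
    exact h2'
  have ha2 : 1 ≤ a ^ 2 := by nlinarith
  calc Real.sqrt ((A *ᵥ x) ⬝ᵥ (H1 *ᵥ (A *ᵥ x)) + y ⬝ᵥ (H2 *ᵥ y))
      ≤ Real.sqrt (a ^ 2 * (x ⬝ᵥ (H1 *ᵥ x) + y ⬝ᵥ (H2 *ᵥ y))) := by
        apply Real.sqrt_le_sqrt; nlinarith
    _ = a * Real.sqrt (x ⬝ᵥ (H1 *ᵥ x) + y ⬝ᵥ (H2 *ᵥ y)) := by
        rw [Real.sqrt_mul (by positivity), Real.sqrt_sq (by linarith)]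

end StmtAux

open StmtAux in
theorem stmt_14
    {n m : ℕ} (F : Matrix (Fin n) (Fin n) ℝ) (B : Matrix (Fin m) (Fin n) ℝ)
    (H1 N : Matrix (Fin n) (Fin n) ℝ) (H2 : Matrix (Fin m) (Fin m) ℝ)
    (η C₁ C₂ : ℝ) (hη : 0 < η) (hC1 : 0 < C₁) (hC2 : 0 < C₂)
    (hH1 : H1 = ((1 : ℝ)/2) • (F + Fᵀ)) (hN : N = ((1 : ℝ)/2) • (F - Fᵀ))
    (hH1pd : H1.PosDef) (hH2pd : H2.PosDef)
    (hBrank : B.rank = m)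
    (hNnorm : wnorm H1 H1⁻¹ N ≤ η)
    (hBnorm : wnorm H1 H2⁻¹ B ≤ C₁)
    (hinfsup : ∀ x : Fin m → ℝ, x ≠ 0 → C₂ * vnorm H2 x ≤ vnorm H1⁻¹ (Bᵀ *ᵥ x))
    (C₃ C₄ : ℝ) (hC3 : 0 < C₃) (hC4 : 0 < C₄)
    (P₁ : Matrix (Fin n) (Fin n) ℝ) (hP₁ : IsUnit P₁.det)
    (hP1F : wnorm H1 H1 (P₁⁻¹ * F - 1) ≤ C₃ * η)
    (hFP1 : wnorm H1 H1 (F⁻¹ * P₁) ≤ C₄)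
    (MU MUt H : Matrix (Fin n ⊕ Fin m) (Fin n ⊕ Fin m) ℝ)
    (hMU : MU = fromBlocks F Bᵀ 0 H2)
    (hMUt : MUt = fromBlocks P₁ Bᵀ 0 H2)
    (hH : H = fromBlocks H1 0 0 H2) :
    wnorm H H (MUt⁻¹ * MU) ≤ 2 + C₃ * η ∧
    wnorm H H (MUt⁻¹ * MU)⁻¹ ≤ C₄ + 1 := by
  -- F is invertible
  have hFdet : IsUnit F.det := by
    rw [isUnit_iff_ne_zero]
    intro h0
    obtain ⟨v, hv, hFv⟩ := (Matrix.exists_mulVec_eq_zero_iff).mpr h0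
    have hpos : 0 < v ⬝ᵥ (H1 *ᵥ v) := by simpa using hH1pd.dotProduct_mulVec_pos hv
    have hzero : v ⬝ᵥ (H1 *ᵥ v) = 0 := by
      have hFt : v ⬝ᵥ (Fᵀ *ᵥ v) = 0 := by
        rw [Matrix.mulVec_transpose, dotProduct_comm, ← Matrix.dotProduct_mulVec, hFv,
          dotProduct_zero]
      rw [hH1, Matrix.smul_mulVec, dotProduct_smul, Matrix.add_mulVec, dotProduct_add,
        hFv, dotProduct_zero, hFt]
      simp
    rw [hzero] at hpos
    exact lt_irrefl _ hpos
  have hH2det : IsUnit H2.det := hH2pd.det_pos.ne'.isUnit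
  have hMUtdet : IsUnit MUt.det := by
    rw [hMUt, det_fromBlocks_zero₂₁]
    exact hP₁.mul hH2det
  set T : Matrix (Fin n ⊕ Fin m) (Fin n ⊕ Fin m) ℝ :=
    fromBlocks (P₁⁻¹ * F) 0 0 (1 : Matrix (Fin m) (Fin m) ℝ) with hTdef
  have key : MUt * T = MU := by
    rw [hMUt, hMU, hTdef, fromBlocks_multiply, ← Matrix.mul_assoc,
      Matrix.mul_nonsing_inv _ hP₁, Matrix.one_mul]
    simp
  have hT : MUt⁻¹ * MU = T := by
    rw [← key, ← Matrix.mul_assoc, Matrix.nonsing_inv_mul _ hMUtdet, Matrix.one_mul]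
  have hTinv : T⁻¹ = fromBlocks (F⁻¹ * P₁) 0 0 (1 : Matrix (Fin m) (Fin m) ℝ) := by
    apply Matrix.inv_eq_right_inv
    rw [hTdef, fromBlocks_multiply]
    have : P₁⁻¹ * F * (F⁻¹ * P₁) = 1 := by
      rw [Matrix.mul_assoc P₁⁻¹, ← Matrix.mul_assoc F, Matrix.mul_nonsing_inv _ hFdet,
        Matrix.one_mul, Matrix.nonsing_inv_mul _ hP₁]
    rw [this]
    simp [fromBlocks_one]
  have hHpos : ∀ v : Fin n ⊕ Fin m → ℝ, v ≠ 0 → 0 < vnorm H v := by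
    intro v hv
    rw [hH]
    exact block_vnorm_pos hH1pd hH2pd v hv
  have hpoint1 : ∀ x : Fin n → ℝ, vnorm H1 ((P₁⁻¹ * F) *ᵥ x) ≤ (1 + C₃ * η) * vnorm H1 x := by
    intro x
    have hdiff := le_of_wnorm_le hH1pd hH1pd hP1F x
    have hx : (P₁⁻¹ * F) *ᵥ x = (P₁⁻¹ * F - 1) *ᵥ x + x := by
      rw [Matrix.sub_mulVec, Matrix.one_mulVec, sub_add_cancel]
    rw [hx]
    calc vnorm H1 ((P₁⁻¹ * F - 1) *ᵥ x + x)
        ≤ vnorm H1 ((P₁⁻¹ * F - 1) *ᵥ x) + vnorm H1 x := vnorm_triangle hH1pd _ _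
      _ ≤ C₃ * η * vnorm H1 x + vnorm H1 x := by linarith
      _ = (1 + C₃ * η) * vnorm H1 x := by ring
  have hpoint2 : ∀ x : Fin n → ℝ, vnorm H1 ((F⁻¹ * P₁) *ᵥ x) ≤ (C₄ + 1) * vnorm H1 x := by
    intro x
    have := le_of_wnorm_le hH1pd hH1pd hFP1 x
    have h0 := vnorm_nonneg H1 x
    nlinarith
  constructor
  · rw [hT]
    have h1le : (1 : ℝ) ≤ 1 + C₃ * η := by nlinarith
    have hall : ∀ v, vnorm H (T *ᵥ v) ≤ (1 + C₃ * η) * vnorm H v := by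
      intro v
      rw [hH, hTdef]
      exact block_bound hH1pd hH2pd _ h1le hpoint1 v
    have := wnorm_le (H2 := H) hHpos (by linarith) hall
    linarith
  · rw [hT, hTinv]
    have h1le : (1 : ℝ) ≤ C₄ + 1 := by linarith
    have hall : ∀ v, vnorm H ((fromBlocks (F⁻¹ * P₁) 0 0 (1 : Matrix (Fin m) (Fin m) ℝ)) *ᵥ v) ≤
        (C₄ + 1) * vnorm H v := by
      intro v
      rw [hH]
      exact block_bound hH1pd hH2pd _ h1le hpoint2 v
    exact wnorm_le (H2 := H) hHpos (by linarith) hall
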